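/- arXiv:1802.03381 — 7 statements merged into one kernel-verified Lean document; each statement's English description precedes it below -/
import Mathlib

section
/- Let (Σ, →) be a terminating state transition system and ≈ an equivalence relation on Σ. Then (Σ, →) is confluent modulo ≈ (i.e., for all σ₁ ≈ σ₁', σ₁ →* σ₂ and σ₁' →* σ₂' imply there exist σ₃, σ₃' with σ₂ →* σ₃, σ₂' →* σ₃' and σ₃ ≈ σ₃') if and only if it is locally confluent modulo ≈ (i.e., it satisfies the α property: σ → τ and σ → τ' imply τ ↓≈ τ'; and the β property: σ → τ and σ ≈ τ' imply τ ↓≈ τ'). -/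
/-- Joinability modulo an equivalence relation. -/
def JoinableMod {S : Type*} (R : S → S → Prop) (E : S → S → Prop) (a b : S) : Prop :=
  ∃ c c', Relation.ReflTransGen R a c ∧ Relation.ReflTransGen R b c' ∧ E c c'

/-- Confluence modulo an equivalence relation. -/
def ConfluentMod {S : Type*} (R : S → S → Prop) (E : S → S → Prop) : Prop :=
  ∀ s1 s1' s2 s2', E s1 s1' → Relation.ReflTransGen R s1 s2 →
    Relation.ReflTransGen R s1' s2' → JoinableMod R E s2 s2'

/-- Local confluence modulo an equivalence: α and β properties. -/
def LocallyConfluentMod {S : Type*} (R : S → S → Prop) (E : S → S → Prop) : Prop :=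
  (∀ s t t', R s t → R s t' → JoinableMod R E t t') ∧
  (∀ s t t', R s t → E s t' → JoinableMod R E t t')

section HuetAux

open Relation

variable {S : Type*} {R E : S → S → Prop}

private lemma jmod_symm (hE : Equivalence E) {a b : S} (h : JoinableMod R E a b) :
    JoinableMod R E b a := by
  obtain ⟨c, c', h1, h2, h3⟩ := h
  exact ⟨c', c, h2, h1, hE.symm h3⟩

private lemma rtg_antisymm (hterm : WellFounded (fun a b => R b a))
    {a b : S} (h1 : Relation.ReflTransGen R a b) (h2 : Relation.ReflTransGen R b a) :
    a = b := by
  rcases (Relation.reflTransGen_iff_eq_or_transGen.mp h1) with rfl | htg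
  · rfl
  · exfalso
    have hTaa : Relation.TransGen R a a := htg.trans_left h2
    have : Relation.TransGen (fun a b => R b a) a a := hTaa.swap
    exact hterm.transGen.asymmetric a a this this

/-- Cliff flattening: if `u →* d ~ d' ←* c ~ c'` then `u` joins `c'` modulo `E`.
(`B` is a predicate closed under reduction, on which the `D`-statement is available.) -/
private lemma FL (hE : Equivalence E) (hterm : WellFounded (fun a b => R b a))
    (B : S → Prop) (hBc : ∀ {a b}, B a → Relation.ReflTransGen R a b → B b)
    (hD : ∀ z, B z → ∀ y u, E z y → Relation.ReflTransGen R z u → JoinableMod R E u y) :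
    ∀ c, B c → ∀ c' d d' u, E c c' → E d d' → Relation.ReflTransGen R u d →
      Relation.ReflTransGen R c d' → B d' → JoinableMod R E u c' := by
  intro c
  induction c using WellFounded.induction hterm.transGen with
  | _ c IH =>
  intro hBcc c' d d' u hcc' hdd' hud hcd' hBd'
  obtain ⟨e, e', he, he', hee'⟩ := hD c hBcc c' d' hcc' hcd'
  -- he : d' →* e, he' : c' →* e', hee' : E e e'
  obtain ⟨f, f', hf, hf', hff'⟩ := hD d' hBd' d e (hE.symm hdd') he
  -- hf : e →* f, hf' : d →* f', hff' : E f f'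
  rcases (Relation.reflTransGen_iff_eq_or_transGen.mp (hcd'.trans he)) with heq | htg
  · -- e = c, hence d' = c by antisymmetry
    have hd'c : d' = c := rtg_antisymm hterm (heq ▸ he) hcd'
    have hEdc' : E d c' := hE.trans (hd'c ▸ hdd') hcc'
    exact ⟨d, c', hud, Relation.ReflTransGen.refl, hEdc'⟩
  · -- c →⁺ e : recurse
    have hBe : B e := hBc hBcc (hcd'.trans he)
    obtain ⟨w, w', hw, hw', hww'⟩ :=
      IH e htg.swap hBe e' f' f u hee' (hE.symm hff') (hud.trans hf') hf (hBc hBe hf)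
    exact ⟨w, w', hw, he'.trans hw', hww'⟩

/-- Extending a join along a reduction of its right endpoint. -/
private lemma T2 (hE : Equivalence E) (hterm : WellFounded (fun a b => R b a))
    (B : S → Prop) (hBc : ∀ {a b}, B a → Relation.ReflTransGen R a b → B b)
    (hD : ∀ z, B z → ∀ y u, E z y → Relation.ReflTransGen R z u → JoinableMod R E u y)
    (hP : ∀ z, B z → ∀ u v, Relation.ReflTransGen R z u → Relation.ReflTransGen R z v →
      JoinableMod R E u v) :
    ∀ m, B m → ∀ u w, JoinableMod R E u m → Relation.ReflTransGen R m w →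
      JoinableMod R E u w := by
  intro m
  induction m using WellFounded.induction hterm.transGen with
  | _ m IH =>
  intro hBm u w hJum hmw
  obtain ⟨d, d', hud, hmd', hdd'⟩ := hJum
  rcases (Relation.reflTransGen_iff_eq_or_transGen.mp hmd') with heq | htg
  · -- d' = m : direct cliff elimination via D(m)
    obtain ⟨f, f', hwf, hdf', hff'⟩ := hD m hBm d w (hE.symm (heq ▸ hdd')) hmw
    -- hwf : w →* f, hdf' : d →* f', hff' : E f f'
    exact ⟨f', f, hud.trans hdf', hwf, hE.symm hff'⟩
  · -- m →⁺ d'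
    obtain ⟨e, e', hd'e, hwe', hee'⟩ := hP m hBm d' w hmd' hmw
    -- hd'e : d' →* e, hwe' : w →* e', hee' : E e e'
    have hJud' : JoinableMod R E u d' := ⟨d, d', hud, Relation.ReflTransGen.refl, hdd'⟩
    have hBd' : B d' := hBc hBm htg.to_reflTransGen
    obtain ⟨p, p', hup, hep', hpp'⟩ := IH d' htg.swap hBd' u e hJud' hd'e
    -- hup : u →* p, hep' : e →* p', hpp' : E p p'
    have hBe : B e := hBc hBd' hd'e
    obtain ⟨q, q', huq, he'q', hqq'⟩ :=
      FL hE hterm B @hBc hD e hBe e' p p' u hee' hpp' hup hep' (hBc hBe hep')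
    exact ⟨q, q', huq, hwe'.trans he'q', hqq'⟩

/-- Main simultaneous induction: confluence from `x` (P) and one-sided cliff joining (D). -/
private lemma mainPD (hE : Equivalence E) (hterm : WellFounded (fun a b => R b a))
    (hα : ∀ s t t', R s t → R s t' → JoinableMod R E t t')
    (hβ : ∀ s t t', R s t → E s t' → JoinableMod R E t t') :
    ∀ x, (∀ u v, Relation.ReflTransGen R x u → Relation.ReflTransGen R x v →
            JoinableMod R E u v) ∧
         (∀ y u, E x y → Relation.ReflTransGen R x u → JoinableMod R E u y) := by
  intro x
  induction x using WellFounded.induction hterm.transGen with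
  | _ x IH =>
  set B : S → Prop := fun z => Relation.TransGen R x z with hBdef
  have hBc : ∀ {a b}, B a → Relation.ReflTransGen R a b → B b :=
    fun ha hab => ha.trans_left hab
  have hD : ∀ z, B z → ∀ y u, E z y → Relation.ReflTransGen R z u → JoinableMod R E u y :=
    fun z hz => (IH z hz.swap).2
  have hP : ∀ z, B z → ∀ u v, Relation.ReflTransGen R z u → Relation.ReflTransGen R z v →
      JoinableMod R E u v :=
    fun z hz => (IH z hz.swap).1
  constructor
  · -- P x
    intro u v hxu hxv
    rcases hxu.cases_head with rfl | ⟨a, hxa, hau⟩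
    · exact ⟨v, v, hxv, Relation.ReflTransGen.refl, hE.refl v⟩
    rcases hxv.cases_head with rfl | ⟨b, hxb, hbv⟩
    · exact ⟨u, u, Relation.ReflTransGen.refl, hxu, hE.refl u⟩
    have hab : JoinableMod R E a b := hα x a b hxa hxb
    have hav : JoinableMod R E a v :=
      T2 hE hterm B @hBc hD hP b (Relation.TransGen.single hxb) a v hab hbv
    have hvu : JoinableMod R E v u :=
      T2 hE hterm B @hBc hD hP a (Relation.TransGen.single hxa) v u (jmod_symm hE hav) hau
    exact jmod_symm hE hvu
  · -- D x
    intro y u hxy hxu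
    rcases hxu.cases_head with rfl | ⟨x₁, hx1, h1u⟩
    · exact ⟨x, y, Relation.ReflTransGen.refl, Relation.ReflTransGen.refl, hxy⟩
    have h1y : JoinableMod R E x₁ y := hβ x x₁ y hx1 hxy
    have hyu : JoinableMod R E y u :=
      T2 hE hterm B @hBc hD hP x₁ (Relation.TransGen.single hx1) y u (jmod_symm hE h1y) h1u
    exact jmod_symm hE hyu

end HuetAux

theorem huet_confluence_modulo_equivalence {S : Type*} (R : S → S → Prop) (E : S → S → Prop)
    (hE : Equivalence E) (hterm : WellFounded (fun a b => R b a)) :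
    ConfluentMod R E ↔ LocallyConfluentMod R E := by
  constructor
  · intro hc
    constructor
    · intro s t t' h h'
      exact hc s s t t' (hE.refl s) (Relation.ReflTransGen.single h)
        (Relation.ReflTransGen.single h')
    · intro s t t' h h'
      exact hc s t' t t' h' (Relation.ReflTransGen.single h) Relation.ReflTransGen.refl
  · rintro ⟨hα, hβ⟩ s1 s1' s2 s2' hE1 h1 h1'
    have hPD := mainPD hE hterm hα hβ
    have hD1 : JoinableMod R E s2 s1' := (hPD s1).2 s1' s2 hE1 h1
    exact T2 hE hterm (fun _ => True) (fun _ _ => trivial)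
      (fun z _ => (hPD z).2) (fun z _ => (hPD z).1) s1' trivial s2 s2' hD1 h1'
end

section
/- Let (Σ, →) be a state transition system and ≈ an equivalence relation with the α property (σ → τ and σ → τ' imply τ ↓≈ τ') and the β property (σ → τ and σ ≈ τ' imply τ ↓≈ τ'). If → is terminating, then for all σ ≈ σ' with σ →* τ and σ' →* τ', the states τ and τ' are joinable modulo ≈. -/
theorem local_confluence_implies_confluence_mod {S : Type*} (R : S → S → Prop)
    (E : S → S → Prop) (hE : Equivalence E)
    (halpha : ∀ s t t', R s t → R s t' → JoinableMod R E t t')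
    (hbeta : ∀ s t t', R s t → E s t' → JoinableMod R E t t')
    (hterm : WellFounded (fun a b => R b a)) :
    ∀ s s' t t', E s s' → Relation.ReflTransGen R s t →
      Relation.ReflTransGen R s' t' → JoinableMod R E t t' := by
  have wf : WellFounded (fun a b => Relation.TransGen R b a) := by
    have h := hterm.transGen
    exact Subrelation.wf (r := Relation.TransGen fun a b => R b a)
      (fun {a b} hab => by
        induction hab with
        | single h => exact Relation.TransGen.single h
        | tail _ h ih => exact Relation.TransGen.head h ih) h
  -- main package: confluence (C), coherence (H), transport (Z), by wf induction
  have main : ∀ z : S,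
      (∀ a b, Relation.ReflTransGen R z a → Relation.ReflTransGen R z b →
        JoinableMod R E a b) ∧
      (∀ w a, E z w → Relation.ReflTransGen R z a → JoinableMod R E a w) ∧
      (∀ p m n, E p z → Relation.ReflTransGen R z m → E m n → JoinableMod R E p n) := by
    intro z
    induction z using wf.induction with
    | _ z IH =>
      refine ⟨?_, ?_, ?_⟩
      · -- C z
        intro a b hza hzb
        rcases hza.cases_head with rfl | ⟨u, hu, hua⟩
        · exact ⟨b, b, hzb, Relation.ReflTransGen.refl, hE.refl b⟩
        rcases hzb.cases_head with rfl | ⟨v, hv, hvb⟩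
        · exact ⟨a, a, Relation.ReflTransGen.refl,
            Relation.ReflTransGen.head hu hua, hE.refl a⟩
        obtain ⟨c, d, hc, hd, hcd⟩ := halpha z u v hu hv
        obtain ⟨p, q, hp, hq, hpq⟩ := (IH u (Relation.TransGen.single hu)).1 a c hua hc
        obtain ⟨D, P1, hD, hP1, hDP1⟩ :=
          (IH c (Relation.TransGen.head' hu hc)).2.2 d q p (hE.symm hcd) hq (hE.symm hpq)
        obtain ⟨e, f, he, hf, hef⟩ := (IH v (Relation.TransGen.single hv)).1 b d hvb hd
        obtain ⟨G, h2, hG, hh, hGh⟩ :=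
          (IH d (Relation.TransGen.head' hv hd)).1 D f hD hf
        obtain ⟨P2, H2, hP2, hH2, hP2H2⟩ :=
          (IH D (Relation.TransGen.head' hv (hd.trans hD))).2.2 P1 G h2
            (hE.symm hDP1) hG hGh
        obtain ⟨E3, P3, hE3, hP3, hE3P3⟩ :=
          (IH f (Relation.TransGen.head' hv (hd.trans hf))).2.2 e H2 P2
            hef (hh.trans hH2) (hE.symm hP2H2)
        exact ⟨P3, E3, hp.trans (hP1.trans (hP2.trans hP3)), he.trans hE3,
          hE.symm hE3P3⟩
      · -- H z
        intro w a hzw hza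
        rcases hza.cases_head with rfl | ⟨z1, hz1, h1a⟩
        · exact ⟨_, w, Relation.ReflTransGen.refl, Relation.ReflTransGen.refl, hzw⟩
        obtain ⟨c, d, hc, hd, hcd⟩ := hbeta z z1 w hz1 hzw
        obtain ⟨u, v, hu2, hv2, huv⟩ := (IH z1 (Relation.TransGen.single hz1)).1 a c h1a hc
        obtain ⟨D, U, hD, hU, hDU⟩ :=
          (IH c (Relation.TransGen.head' hz1 hc)).2.2 d v u (hE.symm hcd) hv2 (hE.symm huv)
        exact ⟨U, D, hu2.trans hU, hd.trans hD, hE.symm hDU⟩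
      · -- Z z
        intro p m n hpz hzm hmn
        rcases hzm.cases_head with rfl | ⟨z1, hz1, h1m⟩
        · exact ⟨p, n, Relation.ReflTransGen.refl, Relation.ReflTransGen.refl,
            hE.trans hpz hmn⟩
        obtain ⟨c, d, hc, hd, hcd⟩ := hbeta z z1 p hz1 (hE.symm hpz)
        obtain ⟨u, v, hu2, hv2, huv⟩ := (IH z1 (Relation.TransGen.single hz1)).1 m c h1m hc
        obtain ⟨D, U, hD, hU, hDU⟩ :=
          (IH c (Relation.TransGen.head' hz1 hc)).2.2 d v u (hE.symm hcd) hv2 (hE.symm huv)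
        obtain ⟨N, D', hN, hD', hND'⟩ :=
          (IH m (Relation.TransGen.head' hz1 h1m)).2.2 n U D (hE.symm hmn)
            (hu2.trans hU) (hE.symm hDU)
        exact ⟨D', N, hd.trans (hD.trans hD'), hN, hE.symm hND'⟩
  intro s s' t t' hss' hst hs't'
  obtain ⟨p, q, hp, hq, hpq⟩ := (main s).2.1 s' t hss' hst
  obtain ⟨m, n, hm, hn, hmn⟩ := (main s').1 q t' hq hs't'
  obtain ⟨P, N, hP, hN, hPN⟩ := (main q).2.2 p m n hpq hm hmn
  exact ⟨P, N, hp.trans hP, hn.trans hN, hPN⟩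
end

section
/- Define an equivalence relation ≈ on finite multisets of constraints, where constraints are either item(a) for a : α or mset(L) for L : List α, as the smallest equivalence such that: (i) multisets with no mset constraints are equivalent iff they are equal, and (ii) if L₁ is a permutation of L₂ and G₁ ≈ G₂ then ({mset L₁} + G₁) ≈ ({mset L₂} + G₂). Then ≈ is a congruence with respect to multiset union: G₁ ≈ G₁' and G₂ ≈ G₂' imply G₁ + G₂ ≈ G₁' + G₂'. -/
inductive C (α : Type*) where
  | item : α → C α
  | mset : List α → C α

def C.isMset {α : Type*} : C α → Bool
  | .mset _ => true
  | .item _ => false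

/-- The multi-set equivalence: smallest equivalence with mset-free multisets
equivalent iff equal, and `{mset L₁} + G₁ ≈ {mset L₂} + G₂` whenever `L₁ ~ L₂`
and `G₁ ≈ G₂`. -/
inductive MEquiv {α : Type*} : Multiset (C α) → Multiset (C α) → Prop
  | base (G : Multiset (C α)) (h : ∀ c ∈ G, c.isMset = false) : MEquiv G G
  | step (L₁ L₂ : List α) (G₁ G₂ : Multiset (C α)) (hperm : L₁.Perm L₂)
      (h : MEquiv G₁ G₂) : MEquiv ({C.mset L₁} + G₁) ({C.mset L₂} + G₂)
  | symm {G H : Multiset (C α)} : MEquiv G H → MEquiv H G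
  | trans {G H K : Multiset (C α)} : MEquiv G H → MEquiv H K → MEquiv G K

lemma mequiv_item_cons {α : Type*} (a : α) {G H : Multiset (C α)}
    (h : MEquiv G H) : MEquiv ({C.item a} + G) ({C.item a} + H) := by
  induction h with
  | base G hG =>
      refine MEquiv.base _ ?_
      intro c hc
      rcases Multiset.mem_add.mp hc with hc | hc
      · simp only [Multiset.mem_singleton] at hc; subst hc; rfl
      · exact hG c hc
  | step L₁ L₂ G₁ G₂ hperm h ih =>
      have e₁ : {C.item a} + ({C.mset L₁} + G₁) = {C.mset L₁} + ({C.item a} + G₁) := by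
        rw [← add_assoc, ← add_assoc, add_comm ({C.item a} : Multiset (C α))]
      have e₂ : {C.item a} + ({C.mset L₂} + G₂) = {C.mset L₂} + ({C.item a} + G₂) := by
        rw [← add_assoc, ← add_assoc, add_comm ({C.item a} : Multiset (C α))]
      rw [e₁, e₂]
      exact MEquiv.step _ _ _ _ hperm ih
  | symm h ih => exact MEquiv.symm ih
  | trans h₁ h₂ ih₁ ih₂ => exact MEquiv.trans ih₁ ih₂

lemma mequiv_refl {α : Type*} (G : Multiset (C α)) : MEquiv G G := by
  induction G using Multiset.induction with
  | empty => exact MEquiv.base 0 (by simp)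
  | cons c G ih =>
      have : (c ::ₘ G) = {c} + G := by simp
      rw [this]
      cases c with
      | item a => exact mequiv_item_cons a ih
      | mset L => exact MEquiv.step _ _ _ _ (List.Perm.refl L) ih

lemma mequiv_add_right {α : Type*} {G H : Multiset (C α)} (K : Multiset (C α))
    (h : MEquiv G H) : MEquiv (G + K) (H + K) := by
  induction h with
  | base G hG => exact mequiv_refl _
  | step L₁ L₂ G₁ G₂ hperm h ih =>
      rw [add_assoc, add_assoc]
      exact MEquiv.step _ _ _ _ hperm ih
  | symm h ih => exact MEquiv.symm ih
  | trans h₁ h₂ ih₁ ih₂ => exact MEquiv.trans ih₁ ih₂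

theorem mequiv_congruence {α : Type*} (G₁ G₁' G₂ G₂' : Multiset (C α))
    (h1 : MEquiv G₁ G₁') (h2 : MEquiv G₂ G₂') :
    MEquiv (G₁ + G₂) (G₁' + G₂') := by
  have a1 : MEquiv (G₁ + G₂) (G₁' + G₂) := mequiv_add_right G₂ h1
  have a2 : MEquiv (G₁' + G₂) (G₁' + G₂') := by
    rw [add_comm G₁' G₂, add_comm G₁' G₂']
    exact mequiv_add_right G₁' h2
  exact MEquiv.trans a1 a2
end

section
/- With the multiset equivalence ≈ from the multi-set items example (the smallest equivalence on multisets of constraints relating {mset L₁} + G₁ to {mset L₂} + G₂ whenever L₁ is a permutation of L₂ and G₁ ≈ G₂, and being equality on mset-free multisets), ≈ has the split property with respect to multiset union: if G ≈ H and G = G₁ + G₂, then there exist H₁, H₂ with H = H₁ + H₂, G₁ ≈ H₁ and G₂ ≈ H₂. -/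
def Cr {α : Type*} (c d : C α) : Prop :=
  (c = d ∧ c.isMset = false) ∨ ∃ L₁ L₂, c = C.mset L₁ ∧ d = C.mset L₂ ∧ L₁.Perm L₂

theorem Cr.refl {α : Type*} (c : C α) : Cr c c := by
  cases c with
  | item a => exact Or.inl ⟨rfl, rfl⟩
  | mset L => exact Or.inr ⟨L, L, rfl, rfl, List.Perm.refl L⟩

theorem Cr.symm {α : Type*} {c d : C α} (h : Cr c d) : Cr d c := by
  rcases h with ⟨rfl, h⟩ | ⟨L₁, L₂, rfl, rfl, hp⟩
  · exact Or.inl ⟨rfl, h⟩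
  · exact Or.inr ⟨L₂, L₁, rfl, rfl, hp.symm⟩

theorem Cr.trans {α : Type*} {c d e : C α} (h : Cr c d) (h' : Cr d e) : Cr c e := by
  rcases h with ⟨rfl, h⟩ | ⟨L₁, L₂, rfl, rfl, hp⟩
  · exact h'
  · rcases h' with ⟨rfl, h'⟩ | ⟨L₂', L₃, he, rfl, hp'⟩
    · exact Or.inr ⟨L₁, L₂, rfl, rfl, hp⟩
    · cases he; exact Or.inr ⟨L₁, L₃, rfl, rfl, hp.trans hp'⟩

theorem rel_trans {α : Type*} {G H K : Multiset (C α)}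
    (h1 : Multiset.Rel Cr G H) (h2 : Multiset.Rel Cr H K) : Multiset.Rel Cr G K := by
  induction h1 generalizing K with
  | zero => rwa [Multiset.rel_zero_left] at h2 ⊢
  | @cons a b as bs hab h ih =>
    rw [Multiset.rel_cons_left] at h2
    obtain ⟨c, cs, hbc, hrel, rfl⟩ := h2
    exact Multiset.Rel.cons (hab.trans hbc) (ih hrel)

/-- cons of a non-mset constraint preserves `MEquiv`. -/
theorem mequiv_cons {α : Type*} {G H : Multiset (C α)} (c : C α)
    (hc : c.isMset = false) (h : MEquiv G H) : MEquiv (c ::ₘ G) (c ::ₘ H) := by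
  induction h with
  | base G h =>
    refine MEquiv.base _ (fun d hd => ?_)
    rcases Multiset.mem_cons.1 hd with rfl | hd
    exacts [hc, h d hd]
  | step L₁ L₂ G₁ G₂ hperm h ih =>
    have e1 : c ::ₘ ({C.mset L₁} + G₁) = {C.mset L₁} + (c ::ₘ G₁) := by
      simp [Multiset.singleton_add]
    have e2 : c ::ₘ ({C.mset L₂} + G₂) = {C.mset L₂} + (c ::ₘ G₂) := by
      simp [Multiset.singleton_add]
    rw [e1, e2]
    exact MEquiv.step _ _ _ _ hperm ih
  | symm _ ih => exact ih.symm
  | trans _ _ ih1 ih2 => exact ih1.trans ih2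

theorem rel_of_mequiv {α : Type*} {G H : Multiset (C α)} (h : MEquiv G H) :
    Multiset.Rel Cr G H := by
  induction h with
  | base G h => exact Multiset.rel_refl_of_refl_on (fun c _ => Cr.refl c)
  | step L₁ L₂ G₁ G₂ hperm h ih =>
    exact Multiset.Rel.add (Multiset.Rel.cons (Or.inr ⟨L₁, L₂, rfl, rfl, hperm⟩)
      Multiset.Rel.zero) ih
  | symm _ ih =>
    rw [← Multiset.rel_flip] at ih
    exact ih.mono (fun c _ d _ hcd => Cr.symm hcd)
  | trans _ _ ih1 ih2 => exact rel_trans ih1 ih2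

theorem mequiv_of_rel {α : Type*} {G H : Multiset (C α)} (h : Multiset.Rel Cr G H) :
    MEquiv G H := by
  induction h with
  | zero => exact MEquiv.base 0 (by simp)
  | @cons a b as bs hab h ih =>
    rcases hab with ⟨rfl, hab⟩ | ⟨L₁, L₂, rfl, rfl, hp⟩
    · exact mequiv_cons a hab ih
    · have e1 : C.mset L₁ ::ₘ as = {C.mset L₁} + as := by simp [Multiset.singleton_add]
      have e2 : C.mset L₂ ::ₘ bs = {C.mset L₂} + bs := by simp [Multiset.singleton_add]
      rw [e1, e2]
      exact MEquiv.step _ _ _ _ hp ih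

theorem mequiv_split {α : Type*} (G H G₁ G₂ : Multiset (C α))
    (h : MEquiv G H) (hsplit : G = G₁ + G₂) :
    ∃ H₁ H₂, H = H₁ + H₂ ∧ MEquiv G₁ H₁ ∧ MEquiv G₂ H₂ := by
  subst hsplit
  have hr := rel_of_mequiv h
  rw [Multiset.rel_add_left] at hr
  obtain ⟨H₁, H₂, h1, h2, rfl⟩ := hr
  exact ⟨H₁, H₂, rfl, mequiv_of_rel h1, mequiv_of_rel h2⟩
end

section
/- For the multi-set items rewrite relation → on states satisfying the invariant S (at most one mset constraint), the α property modulo the permutation equivalence ≈ holds: if σ → τ and σ → τ', then τ ↓≈ τ'. Concretely, the only critical overlap {item a, item b, mset L} yields the pair ({item b, mset (a::L)}, {item a, mset (b::L)}), which rewrite respectively to {mset (b::a::L)} and {mset (a::b::L)}, and these are ≈-equivalent since b::a::L is a permutation of a::b::L. -/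
/-- The multi-set items rewrite relation:
`{mset L, item a} + G → {mset (a :: L)} + G`. -/
inductive Step {α : Type*} : Multiset (C α) → Multiset (C α) → Prop
  | rule (L : List α) (a : α) (G : Multiset (C α)) :
      Step ({C.mset L, C.item a} + G) ({C.mset (a :: L)} + G)

def SInv {α : Type*} (σ : Multiset (C α)) : Prop :=
  Multiset.countP (fun c => c.isMset = true) σ ≤ 1

lemma step_inv {α : Type*} {σ τ : Multiset (C α)} (h : Step σ τ) :
    ∃ L a G, σ = {C.mset L, C.item a} + G ∧ τ = {C.mset (a :: L)} + G := by
  cases h with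
  | rule L a G => exact ⟨L, a, G, rfl, rfl⟩

theorem alpha_property_multiset_items {α : Type*} (σ τ τ' : Multiset (C α))
    (hσ : SInv σ) (h1 : Step σ τ) (h2 : Step σ τ') :
    JoinableMod Step MEquiv τ τ' := by
  obtain ⟨L, a, G, rfl, rfl⟩ := step_inv h1
  obtain ⟨L', a', G', heq, rfl⟩ := step_inv h2
  clear h1 h2
  -- normalize to cons form
  simp only [Multiset.insert_eq_cons, Multiset.singleton_add, Multiset.cons_add] at heq hσ ⊢
  -- G has no msets
  have hG : ∀ c ∈ G, C.isMset c = false := by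
    intro c hc
    by_contra hcc
    have hge : 1 ≤ Multiset.countP (fun c => C.isMset c = true) G := by
      rw [Nat.one_le_iff_ne_zero]
      intro h0
      have := Multiset.countP_eq_zero.mp h0 c hc
      simp at this
      exact hcc (by simp [this])
    unfold SInv at hσ
    rw [Multiset.countP_cons, Multiset.countP_cons] at hσ
    simp only [show (C.mset L : C α).isMset = true from rfl,
      show (C.item a : C α).isMset = false from rfl, decide_true, decide_false,
      if_true, if_false] at hσ
    omega
  -- L = L'
  have hL : L = L' := by
    have hmem : C.mset L' ∈ (C.mset L ::ₘ C.item a ::ₘ G : Multiset (C α)) := by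
      rw [heq]; simp
    rcases Multiset.mem_cons.mp hmem with h | h
    · exact (C.mset.injEq .. ▸ h.symm : L = L')
    · rcases Multiset.mem_cons.mp h with h | h
      · exact absurd h (by simp [C.isMset])
      · exact absurd (hG _ h) (by simp [C.isMset])
  subst hL
  have heq2 : (C.item a ::ₘ G : Multiset (C α)) = C.item a' ::ₘ G' :=
    (Multiset.cons_inj_right _).mp heq
  rcases Multiset.cons_eq_cons.mp heq2 with ⟨ha, hGG⟩ | ⟨hne, H, hG1, hG2⟩
  · -- same rewrite
    obtain rfl : a = a' := by injection ha
    subst hGG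
    refine ⟨_, _, .refl, .refl, ?_⟩
    have := MEquiv.step (a :: L) (a :: L) G G (List.Perm.refl _) (MEquiv.base G hG)
    simpa using this
  · -- overlap
    subst hG1; subst hG2
    have hH : ∀ c ∈ H, C.isMset c = false := fun c hc => hG c (Multiset.mem_cons_of_mem hc)
    refine ⟨C.mset (a' :: a :: L) ::ₘ H, C.mset (a :: a' :: L) ::ₘ H, ?_, ?_, ?_⟩
    · refine Relation.ReflTransGen.single ?_
      have := Step.rule (a :: L) a' H
      simpa using this
    · refine Relation.ReflTransGen.single ?_
      have := Step.rule (a' :: L) a H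
      simpa using this
    · have := MEquiv.step (a' :: a :: L) (a :: a' :: L) H H (List.Perm.swap a a' L) (MEquiv.base H hH)
      simpa using this
end

section
/- For the multi-set items rewrite system restricted to states with exactly one mset constraint: if σ and σ' are ≈-equivalent states each containing exactly one mset constraint and n item constraints, then any →-normal forms reachable from σ and σ' are ≈-equivalent. In particular, starting from {mset L} + {item a₁, …, item aₙ}, every normal form is {mset L'} where L' is a permutation of a₁ :: … :: aₙ :: L. -/
/-- A normal form has no successor. -/
def NormalForm {α : Type*} (σ : Multiset (C α)) : Prop := ¬ ∃ τ, Step σ τ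

def cont {α : Type*} : C α → Multiset α
  | .item a => {a}
  | .mset L => ↑L

def Mcont {α : Type*} (σ : Multiset (C α)) : Multiset α :=
  (σ.map cont).sum

@[simp] lemma Mcont_zero {α : Type*} : Mcont (0 : Multiset (C α)) = 0 := rfl

@[simp] lemma Mcont_cons {α : Type*} (c : C α) (σ : Multiset (C α)) :
    Mcont (c ::ₘ σ) = cont c + Mcont σ := by
  simp [Mcont]

@[simp] lemma Mcont_add {α : Type*} (σ τ : Multiset (C α)) :
    Mcont (σ + τ) = Mcont σ + Mcont τ := by
  simp [Mcont]

@[simp] lemma Mcont_singleton {α : Type*} (c : C α) :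
    Mcont ({c} : Multiset (C α)) = cont c := by
  simp [Mcont]

@[simp] lemma Mcont_items {α : Type*} (I : Multiset α) :
    Mcont (I.map C.item) = I := by
  induction I using Multiset.induction with
  | empty => simp
  | cons a s ih => simp [ih, cont]

lemma coe_cons {α : Type*} (a : α) (L : List α) :
    ((a :: L : List α) : Multiset α) = {a} + (↑L : Multiset α) := by
  rw [Multiset.singleton_add, Multiset.cons_coe]

lemma step_cont {α : Type*} {σ τ : Multiset (C α)} (h : Step σ τ) : Mcont σ = Mcont τ := by
  cases h with
  | rule L a G =>
    rw [Multiset.insert_eq_cons, Multiset.cons_add, Multiset.singleton_add,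
      Multiset.singleton_add, Mcont_cons, Mcont_cons, Mcont_cons]
    simp only [cont, coe_cons]
    abel

lemma step_count {α : Type*} {σ τ : Multiset (C α)} (h : Step σ τ) :
    Multiset.countP (fun c => C.isMset c = true) σ =
    Multiset.countP (fun c => C.isMset c = true) τ := by
  cases h with
  | rule L a G =>
    rw [Multiset.insert_eq_cons, Multiset.cons_add, Multiset.singleton_add,
      Multiset.singleton_add, Multiset.countP_cons, Multiset.countP_cons, Multiset.countP_cons]
    simp [C.isMset]

lemma rtg_cont {α : Type*} {σ τ : Multiset (C α)} (h : Relation.ReflTransGen Step σ τ) :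
    Mcont σ = Mcont τ := by
  induction h with
  | refl => rfl
  | tail _ hstep ih => exact ih.trans (step_cont hstep)

lemma rtg_count {α : Type*} {σ τ : Multiset (C α)} (h : Relation.ReflTransGen Step σ τ) :
    Multiset.countP (fun c => C.isMset c = true) σ =
    Multiset.countP (fun c => C.isMset c = true) τ := by
  induction h with
  | refl => rfl
  | tail _ hstep ih => exact ih.trans (step_count hstep)

lemma mequiv_cont {α : Type*} {σ τ : Multiset (C α)} (h : MEquiv σ τ) : Mcont σ = Mcont τ := by
  induction h with
  | base G _ => rfl
  | step L₁ L₂ G₁ G₂ hperm _ ih =>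
    simp only [Mcont_add, Mcont_singleton, cont, ih, Multiset.coe_eq_coe.mpr hperm]
  | symm _ ih => exact ih.symm
  | trans _ _ ih₁ ih₂ => exact ih₁.trans ih₂

lemma decomp {α : Type*} (σ : Multiset (C α))
    (h : Multiset.countP (fun c => C.isMset c = true) σ = 1) :
    ∃ (L : List α) (I : Multiset α), σ = {C.mset L} + I.map C.item := by
  induction σ using Multiset.induction with
  | empty => simp at h
  | cons a s ih =>
    rw [Multiset.countP_cons] at h
    by_cases ha : C.isMset a = true
    · have hs0 : Multiset.countP (fun c => C.isMset c = true) s = 0 := by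
        simp [ha] at h; omega
      have hs : ∀ c ∈ s, ∃ b, c = C.item b := by
        intro c hc
        cases c with
        | item b => exact ⟨b, rfl⟩
        | mset M =>
          exfalso
          have hpos : 0 < Multiset.countP (fun c => C.isMset c = true) s :=
            Multiset.countP_pos.mpr ⟨C.mset M, hc, rfl⟩
          omega
      obtain ⟨L, rfl⟩ : ∃ L, a = C.mset L := by
        cases a with
        | item b => simp [C.isMset] at ha
        | mset M => exact ⟨M, rfl⟩
      have : ∃ I : Multiset α, s = I.map C.item := by
        clear h ih hs0
        induction s using Multiset.induction with
        | empty => exact ⟨0, by simp⟩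
        | cons c t iht =>
          obtain ⟨b, rfl⟩ := hs c (Multiset.mem_cons_self c t)
          obtain ⟨I, rfl⟩ := iht (fun d hd => hs d (Multiset.mem_cons_of_mem hd))
          exact ⟨b ::ₘ I, by simp⟩
      obtain ⟨I, rfl⟩ := this
      exact ⟨L, I, by rw [← Multiset.singleton_add]⟩
    · have hs1 : Multiset.countP (fun c => C.isMset c = true) s = 1 := by
        simp [ha] at h; omega
      obtain ⟨L, I, rfl⟩ := ih hs1
      obtain ⟨b, rfl⟩ : ∃ b, a = C.item b := by
        cases a with
        | item b => exact ⟨b, rfl⟩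
        | mset M => simp [C.isMset] at ha
      refine ⟨L, b ::ₘ I, ?_⟩
      rw [Multiset.map_cons, Multiset.add_cons]

lemma normal_no_items {α : Type*} {L : List α} {I : Multiset α}
    (h : NormalForm ({C.mset L} + I.map C.item)) : I = 0 := by
  by_contra hI
  obtain ⟨a, ha⟩ := Multiset.exists_mem_of_ne_zero hI
  obtain ⟨I', rfl⟩ := Multiset.exists_cons_of_mem ha
  apply h
  refine ⟨{C.mset (a :: L)} + I'.map C.item, ?_⟩
  have heq : ({C.mset L} : Multiset (C α)) + (a ::ₘ I').map C.item =
      {C.mset L, C.item a} + I'.map C.item := by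
    rw [Multiset.map_cons, Multiset.singleton_add, Multiset.insert_eq_cons,
      Multiset.cons_add, Multiset.singleton_add]
  rw [heq]
  exact Step.rule L a (I'.map C.item)

theorem normal_forms_equivalent {α : Type*} :
    (∀ σ σ' τ τ' : Multiset (C α), MEquiv σ σ' →
      Multiset.countP (fun c => c.isMset = true) σ = 1 →
      Multiset.countP (fun c => c.isMset = true) σ' = 1 →
      Relation.ReflTransGen Step σ τ → Relation.ReflTransGen Step σ' τ' →
      NormalForm τ → NormalForm τ' → MEquiv τ τ') ∧
    (∀ (L : List α) (I : Multiset α) (τ : Multiset (C α)),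
      Relation.ReflTransGen Step ({C.mset L} + I.map C.item) τ → NormalForm τ →
      ∃ L' : List α, τ = {C.mset L'} ∧ (↑L' : Multiset α) = I + ↑L) := by
  have key : ∀ (σ τ : Multiset (C α)),
      Multiset.countP (fun c => C.isMset c = true) σ = 1 →
      Relation.ReflTransGen Step σ τ → NormalForm τ →
      ∃ L' : List α, τ = {C.mset L'} ∧ (↑L' : Multiset α) = Mcont σ := by
    intro σ τ hcount hr hn
    have hcτ : Multiset.countP (fun c => C.isMset c = true) τ = 1 :=
      (rtg_count hr) ▸ hcount
    obtain ⟨L', I, rfl⟩ := decomp τ hcτ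
    have hI : I = 0 := normal_no_items hn
    subst hI
    refine ⟨L', by simp, ?_⟩
    have hc := rtg_cont hr
    simp [cont] at hc
    exact hc.symm
  constructor
  · intro σ σ' τ τ' heq hc hc' hr hr' hn hn'
    obtain ⟨M, rfl, hM⟩ := key σ τ hc hr hn
    obtain ⟨M', rfl, hM'⟩ := key σ' τ' hc' hr' hn'
    have hcc : Mcont σ = Mcont σ' := mequiv_cont heq
    have hperm : M.Perm M' := Multiset.coe_eq_coe.mp (by rw [hM, hM', hcc])
    have := MEquiv.step M M' 0 0 hperm (MEquiv.base 0 (by simp))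
    simpa using this
  · intro L I τ hr hn
    have hc : Multiset.countP (fun c => C.isMset c = true) ({C.mset L} + I.map C.item) = 1 := by
      have h0 : Multiset.countP (fun c => C.isMset c = true) (I.map C.item) = 0 :=
        Multiset.countP_eq_zero.mpr (by
          rintro c hcm
          obtain ⟨b, _, rfl⟩ := Multiset.mem_map.mp hcm
          simp [C.isMset])
      rw [Multiset.countP_add, h0,
        show ({C.mset L} : Multiset (C α)) = C.mset L ::ₘ 0 from rfl,
        Multiset.countP_cons, Multiset.countP_zero]
      simp [C.isMset]
    obtain ⟨L', rfl, hL'⟩ := key _ τ hc hr hn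
    refine ⟨L', rfl, ?_⟩
    rw [hL']
    simp [cont]
    exact add_comm _ _
end

section
/- There exists an equivalence relation on finite multisets over a two-element constraint alphabet {c, d} that is a congruence with respect to multiset union but does not have the split property: namely, the smallest equivalence ≈ with σ ≈ σ (equality) and ({c, c} + G) ≈ ({d} + G') whenever G ≈ G'. For this relation, {c, c} ≈ {d}, and {c, c} = {c} + {c}, but there do not exist H₁, H₂ with {d} = H₁ + H₂, {c} ≈ H₁ and {c} ≈ H₂. -/
inductive C2 where
  | c : C2
  | d : C2

/-- Smallest equivalence with `σ ≈ σ` and `{c,c} + G ≈ {d} + G'` whenever `G ≈ G'`. -/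
inductive E16 : Multiset C2 → Multiset C2 → Prop
  | refl (G : Multiset C2) : E16 G G
  | rule (G G' : Multiset C2) (h : E16 G G') :
      E16 (({C2.c, C2.c} : Multiset C2) + G) (({C2.d} : Multiset C2) + G')
  | symm {G H : Multiset C2} : E16 G H → E16 H G
  | trans {G H K : Multiset C2} : E16 G H → E16 H K → E16 G K

def wC2 : C2 → ℕ
  | C2.c => 1
  | C2.d => 2

lemma E16_weight {G H : Multiset C2} (h : E16 G H) :
    (G.map wC2).sum = (H.map wC2).sum := by
  induction h with
  | refl G => rfl
  | rule G G' h ih =>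
      simp only [Multiset.insert_eq_cons, Multiset.map_add, Multiset.sum_add,
        Multiset.map_cons, Multiset.sum_cons, Multiset.map_singleton, Multiset.sum_singleton, show wC2 C2.c = 1 from rfl, show wC2 C2.d = 2 from rfl, ih]
      
  | symm h ih => omega
  | trans h1 h2 ih1 ih2 => omega

lemma E16_add_right {G G' : Multiset C2} (h : E16 G G') (K : Multiset C2) :
    E16 (G + K) (G' + K) := by
  induction h with
  | refl G => exact E16.refl _
  | rule G G' h ih =>
      rw [add_assoc, add_assoc]
      exact E16.rule _ _ ih
  | symm h ih => exact E16.symm ih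
  | trans h1 h2 ih1 ih2 => exact E16.trans ih1 ih2

lemma weight_eq_zero {H : Multiset C2} (h : (H.map wC2).sum = 0) : H = 0 := by
  induction H using Multiset.induction with
  | empty => rfl
  | cons a s ih =>
      simp only [Multiset.map_cons, Multiset.sum_cons] at h
      cases a <;> simp [wC2] at h

lemma weight_eq_one {H : Multiset C2} (h : (H.map wC2).sum = 1) : H = {C2.c} := by
  induction H using Multiset.induction with
  | empty => simp at h
  | cons a s ih =>
      simp only [Multiset.map_cons, Multiset.sum_cons] at h
      cases a with
      | c =>
          have hs : (s.map wC2).sum = 0 := by simpa [wC2] using h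
          rw [weight_eq_zero hs]
          rfl
      | d => simp only [show wC2 C2.d = 2 from rfl] at h; omega

theorem congruence_without_split :
    (∀ x x' y y' : Multiset C2, E16 x x' → E16 y y' → E16 (x + y) (x' + y')) ∧
    E16 ({C2.c, C2.c} : Multiset C2) ({C2.d} : Multiset C2) ∧
    ({C2.c, C2.c} : Multiset C2) = ({C2.c} : Multiset C2) + ({C2.c} : Multiset C2) ∧
    ¬ ∃ H₁ H₂ : Multiset C2, ({C2.d} : Multiset C2) = H₁ + H₂ ∧
        E16 ({C2.c} : Multiset C2) H₁ ∧ E16 ({C2.c} : Multiset C2) H₂ := by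
  refine ⟨?_, ?_, ?_, ?_⟩
  · intro x x' y y' hx hy
    exact E16.trans (E16_add_right hx y)
      (by rw [add_comm x' y, add_comm x' y']; exact E16_add_right hy x')
  · have := E16.rule 0 0 (E16.refl 0)
    simpa using this
  · rfl
  · rintro ⟨H₁, H₂, heq, h1, h2⟩
    have w1 := E16_weight h1
    have w2 := E16_weight h2
    have : (({C2.d} : Multiset C2).map wC2).sum = (H₁.map wC2).sum + (H₂.map wC2).sum := by
      rw [heq, Multiset.map_add, Multiset.sum_add]
    simp only [Multiset.map_singleton, Multiset.sum_singleton, show wC2 C2.c = 1 from rfl, show wC2 C2.d = 2 from rfl] at this w1 w2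
    have hH1 : H₁ = {C2.c} := weight_eq_one w1.symm
    have : C2.c ∈ ({C2.d} : Multiset C2) := by
      rw [heq, hH1]; exact Multiset.mem_add.2 (Or.inl (Multiset.mem_singleton.2 rfl))
    simp at this
end
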